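/- arXiv:1803.11322 — 2 statements merged into one kernel-verified Lean document; each statement's English description precedes it below -/
import Mathlib

section
/- For a < b and t with t + a > 0, ∫_a^b log(x+t) / √((b-x)(x-a)) dx = 2π log((√(t+a) + √(t+b))/2). -/
open Complex intervalIntegral Real Set MeasureTheory

private lemma key1 (s : ℝ) (hs : |s| < 1) :
    ∫ θ in (0:ℝ)..(2*Real.pi), Complex.log (1 - s * Complex.exp (θ * Complex.I)) = 0 := by
  have hd : DifferentiableOn ℂ (fun z => Complex.log (1 - s * z)) (Metric.closedBall 0 1) := by
    intro z hz
    have hmem : (1 - (s:ℂ) * z) ∈ Complex.slitPlane := by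
      refine Complex.mem_slitPlane_iff.mpr (Or.inl ?_)
      simp only [Complex.sub_re, Complex.one_re, Complex.mul_re, Complex.ofReal_re,
        Complex.ofReal_im, zero_mul, sub_zero]
      have hz1 : ‖z‖ ≤ 1 := by simpa [Complex.dist_eq] using Metric.mem_closedBall.mp hz
      have : |s * z.re| ≤ |s| * 1 := by
        rw [abs_mul]
        exact mul_le_mul_of_nonneg_left ((Complex.abs_re_le_norm z).trans hz1) (abs_nonneg s)
      nlinarith [abs_le.mp this, abs_le.mp hs.le]
    exact ((Complex.differentiableAt_log hmem).comp (f := fun z : ℂ => 1 - (s:ℂ) * z) z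
      (by fun_prop)).differentiableWithinAt
  have h := hd.circleIntegral_sub_inv_smul (Metric.mem_ball_self one_pos)
  simp only [mul_zero, sub_zero, Complex.log_one, mul_zero] at h
  -- unfold circle integral
  rw [circleIntegral] at h
  simp only [deriv_circleMap, circleMap, Complex.ofReal_one, one_mul, zero_add, smul_eq_mul,
    sub_zero] at h
  have hne : ∀ θ : ℝ, Complex.exp (θ * Complex.I) ≠ 0 := fun θ => Complex.exp_ne_zero _
  have h2 : ∫ θ in (0:ℝ)..(2*Real.pi),
      Complex.I * Complex.log (1 - s * Complex.exp (θ * Complex.I)) = 0 := by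
    simp only [zero_add, mul_zero] at h
    rw [← h]
    apply intervalIntegral.integral_congr
    intro θ _
    field_simp
  have h3 := congrArg (fun z => Complex.I⁻¹ * z) h2
  simp only [mul_zero] at h3
  rw [← intervalIntegral.integral_const_mul] at h3
  rw [← h3]
  apply intervalIntegral.integral_congr
  intro θ _
  simp only
  rw [← mul_assoc, inv_mul_cancel₀ Complex.I_ne_zero, one_mul]

private lemma slit (s : ℝ) (hs : |s| < 1) (θ : ℝ) :
    (0:ℝ) < (1 - s * Complex.exp (θ * Complex.I)).re := by
  have h1 : ‖Complex.exp (θ * Complex.I)‖ = 1 := by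
    simpa using Complex.norm_exp_ofReal_mul_I θ
  have h2 : |((s:ℂ) * Complex.exp (θ * Complex.I)).re| ≤ |s| := by
    calc |((s:ℂ) * Complex.exp (θ * Complex.I)).re| ≤ ‖(s:ℂ) * Complex.exp (θ * Complex.I)‖ :=
        Complex.abs_re_le_norm _
    _ = |s| := by rw [norm_mul, h1, mul_one]; simp
  have := abs_le.mp h2
  simp only [Complex.sub_re, Complex.one_re]
  linarith

private lemma key2 (s : ℝ) (hs : |s| < 1) :
    ∫ θ in (0:ℝ)..(2*Real.pi), Real.log (1 - 2*s*Real.cos θ + s^2) = 0 := by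
  have key1 := key1 s hs
  have hcont : Continuous (fun θ : ℝ => Complex.log (1 - s * Complex.exp (θ * Complex.I))) := by
    apply Continuous.clog (by fun_prop)
    intro θ
    exact Complex.mem_slitPlane_iff.mpr (Or.inl (slit s hs θ))
  have hint : IntervalIntegrable (fun θ : ℝ => Complex.log (1 - s * Complex.exp (θ * Complex.I)))
      MeasureTheory.volume 0 (2*Real.pi) := hcont.intervalIntegrable _ _
  have hre := Complex.reCLM.intervalIntegral_comp_comm hint
  rw [key1] at hre
  simp only [Complex.reCLM_apply, map_zero] at hre
  have hpt : ∀ θ : ℝ, Real.log (1 - 2*s*Real.cos θ + s^2) =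
      2 * (Complex.log (1 - s * Complex.exp (θ * Complex.I))).re := by
    intro θ
    have hne : (1 - (s:ℂ) * Complex.exp (θ * Complex.I)) ≠ 0 := by
      intro h
      have := slit s hs θ
      rw [h] at this
      simp at this
    have hw : (0:ℝ) < ‖(1 - s * Complex.exp (θ * Complex.I))‖ :=
      norm_pos_iff.mpr hne
    have hsq : ‖(1 - s * Complex.exp (θ * Complex.I))‖ ^ 2
        = 1 - 2*s*Real.cos θ + s^2 := by
      rw [Complex.sq_norm, Complex.normSq_apply]
      simp only [Complex.sub_re, Complex.sub_im, Complex.one_re, Complex.one_im,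
        Complex.mul_re, Complex.mul_im, Complex.ofReal_re, Complex.ofReal_im,
        Complex.exp_ofReal_mul_I_re, Complex.exp_ofReal_mul_I_im, zero_mul, sub_zero,
        zero_sub, add_zero, zero_add]
      linear_combination (s^2) * (Real.sin_sq_add_cos_sq θ)
    rw [Complex.log_re, ← hsq, Real.log_pow]
    push_cast
    ring
  have : (fun θ : ℝ => Real.log (1 - 2*s*Real.cos θ + s^2))
      = fun θ : ℝ => 2 * (Complex.log (1 - s * Complex.exp (θ * Complex.I))).re := funext hpt
  rw [this, intervalIntegral.integral_const_mul, hre, mul_zero]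

private lemma key3 (s : ℝ) (hs : |s| < 1) :
    ∫ θ in (0:ℝ)..Real.pi, Real.log (1 - 2*s*Real.cos θ + s^2) = 0 := by
  have key2 := key2 s hs
  set f : ℝ → ℝ := fun θ => Real.log (1 - 2*s*Real.cos θ + s^2) with hf
  have hpos : ∀ θ : ℝ, (0:ℝ) < 1 - 2*s*Real.cos θ + s^2 := by
    intro θ
    have h4 : s * Real.cos θ ≤ |s| := by
      calc s * Real.cos θ ≤ |s * Real.cos θ| := le_abs_self _
      _ = |s| * |Real.cos θ| := abs_mul _ _
      _ ≤ |s| * 1 := mul_le_mul_of_nonneg_left (Real.abs_cos_le_one θ) (abs_nonneg s)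
      _ = |s| := mul_one _
    have h5 : (0:ℝ) < 1 - |s| := by linarith
    nlinarith [mul_pos h5 h5, h4, _root_.sq_abs s]
  have hcont : Continuous f :=
    Continuous.log (by fun_prop) (fun θ => (hpos θ).ne')
  have hint : ∀ u v : ℝ, IntervalIntegrable f MeasureTheory.volume u v :=
    fun u v => hcont.intervalIntegrable u v
  have hsplit : (∫ θ in (0:ℝ)..(2*Real.pi), f θ)
      = (∫ θ in (0:ℝ)..Real.pi, f θ) + ∫ θ in Real.pi..(2*Real.pi), f θ :=
    (intervalIntegral.integral_add_adjacent_intervals (hint 0 Real.pi)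
      (hint Real.pi (2*Real.pi))).symm
  have hsym : (∫ θ in Real.pi..(2*Real.pi), f θ) = ∫ θ in (0:ℝ)..Real.pi, f θ := by
    have := intervalIntegral.integral_comp_sub_left (a := 0) (b := Real.pi) f (2*Real.pi)
    rw [show 2*Real.pi - Real.pi = Real.pi by ring, show 2*Real.pi - 0 = 2*Real.pi by ring] at this
    rw [← this]
    apply intervalIntegral.integral_congr
    intro θ _
    simp only [hf, Real.cos_two_pi_sub]
  rw [key2, hsym] at hsplit
  linarith

private lemma key4 (c r : ℝ) (hr : 0 < r) (hc : r < c) :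
    ∫ θ in (0:ℝ)..Real.pi, Real.log (c + r * Real.cos θ)
      = Real.pi * Real.log ((c + Real.sqrt (c^2 - r^2)) / 2) := by
  set D := Real.sqrt (c^2 - r^2) with hD
  have hc0 : 0 < c := hr.trans hc
  have hD2 : D^2 = c^2 - r^2 := Real.sq_sqrt (by nlinarith)
  have hD0 : 0 ≤ D := Real.sqrt_nonneg _
  have hDc : D < c := by nlinarith
  set s := (c - D) / r with hs_def
  have hs0 : 0 < s := div_pos (by linarith) hr
  have hs1 : s < 1 := by
    rw [hs_def, div_lt_one hr]
    nlinarith [sq_nonneg (D - (c - r))]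
  have hrs : r * (1 + s^2) = 2 * s * c := by
    rw [hs_def]
    field_simp
    nlinarith
  have hK : (c + D) / 2 = r / (2 * s) := by
    rw [hs_def]
    rw [div_eq_div_iff (by norm_num) (by positivity)]
    field_simp
    nlinarith
  have hKpos : (0:ℝ) < r / (2*s) := by positivity
  have hqpos : ∀ θ : ℝ, (0:ℝ) < 1 + 2*s*Real.cos θ + s^2 := by
    intro θ
    nlinarith [Real.neg_one_le_cos θ, Real.cos_le_one θ, sq_nonneg (1 - s), sq_nonneg (1 + s)]
  have hpt : ∀ θ : ℝ, Real.log (c + r * Real.cos θ)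
      = Real.log (r / (2*s)) + Real.log (1 + 2*s*Real.cos θ + s^2) := by
    intro θ
    rw [← Real.log_mul hKpos.ne' (hqpos θ).ne']
    congr 1
    field_simp
    nlinarith [hrs]
  have h3 := key3 (-s) (by rw [abs_of_nonpos (by linarith)]; linarith)
  simp only [mul_neg, neg_mul, neg_neg, sub_neg_eq_add, neg_sq] at h3
  calc ∫ θ in (0:ℝ)..Real.pi, Real.log (c + r * Real.cos θ)
      = ∫ θ in (0:ℝ)..Real.pi,
        (Real.log (r / (2*s)) + Real.log (1 + 2*s*Real.cos θ + s^2)) := by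
        apply intervalIntegral.integral_congr; intro θ _; exact hpt θ
    _ = (∫ _ in (0:ℝ)..Real.pi, Real.log (r / (2*s)))
        + ∫ θ in (0:ℝ)..Real.pi, Real.log (1 + 2*s*Real.cos θ + s^2) := by
        apply intervalIntegral.integral_add (intervalIntegrable_const)
        exact (Continuous.log (by fun_prop) (fun θ => (hqpos θ).ne')).intervalIntegrable _ _
    _ = Real.pi * Real.log (r / (2*s)) := by
        rw [h3, add_zero, intervalIntegral.integral_const, smul_eq_mul, sub_zero]
    _ = Real.pi * Real.log ((c + D) / 2) := by rw [hK]

private lemma key5 (a b t : ℝ) (hab : a < b) :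
    ∫ x in a..b, Real.log (x + t) / Real.sqrt ((b - x) * (x - a))
      = ∫ θ in (0:ℝ)..Real.pi,
          Real.log ((t + (a+b)/2) + ((b-a)/2) * Real.cos θ) := by
  set m := (a+b)/2 with hm
  set r := (b-a)/2 with hr_def
  have hr : 0 < r := by rw [hr_def]; linarith
  set φ : ℝ → ℝ := fun θ => m + r * Real.cos θ with hφ
  have hmra : m - r = a := by rw [hm, hr_def]; ring
  have hmrb : m + r = b := by rw [hm, hr_def]; ring
  have himg : φ '' Ioo 0 Real.pi = Ioo a b := by
    ext x
    constructor
    · rintro ⟨θ, ⟨h0, hπ⟩, rfl⟩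
      have h1 : Real.cos θ < Real.cos 0 :=
        Real.strictAntiOn_cos ⟨le_refl 0, Real.pi_pos.le⟩ ⟨h0.le, hπ.le⟩ h0
      have h2 : Real.cos Real.pi < Real.cos θ :=
        Real.strictAntiOn_cos ⟨h0.le, hπ.le⟩ ⟨Real.pi_pos.le, le_refl _⟩ hπ
      rw [Real.cos_zero] at h1
      rw [Real.cos_pi] at h2
      constructor
      · rw [← hmra]; simp only [hφ]; nlinarith
      · rw [← hmrb]; simp only [hφ]; nlinarith
    · rintro ⟨hax, hxb⟩
      refine ⟨Real.arccos ((x - m) / r), ⟨?_, ?_⟩, ?_⟩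
      · rw [Real.arccos_pos]
        rw [div_lt_one hr]
        linarith [hmrb ▸ hxb]
      · refine lt_of_le_of_ne (Real.arccos_le_pi _) ?_
        rw [ne_eq, Real.arccos_eq_pi, not_le, neg_lt, ← neg_div, div_lt_iff₀ hr]
        linarith [hmra ▸ hax]
      · simp only [hφ]
        rw [Real.cos_arccos (by rw [neg_le, ← neg_div]; rw [div_le_one hr]; linarith [hmra ▸ hax])
          (by rw [div_le_one hr]; linarith [hmrb ▸ hxb])]
        field_simp
        ring
  have hderiv : ∀ θ ∈ Ioo (0:ℝ) Real.pi,
      HasDerivWithinAt φ (r * (-Real.sin θ)) (Ioo 0 Real.pi) θ := by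
    intro θ _
    exact (((Real.hasDerivAt_cos θ).const_mul r).const_add m).hasDerivWithinAt
  have hinj : InjOn φ (Ioo 0 Real.pi) := by
    intro θ1 h1 θ2 h2 he
    have : Real.cos θ1 = Real.cos θ2 := by
      have := he
      simp only [hφ] at this
      have := add_left_cancel this
      exact mul_left_cancel₀ hr.ne' this
    exact Real.injOn_cos ⟨h1.1.le, h1.2.le⟩ ⟨h2.1.le, h2.2.le⟩ this
  have hchg := MeasureTheory.integral_image_eq_integral_abs_deriv_smul
    measurableSet_Ioo hderiv hinj
    (fun x => Real.log (x + t) / Real.sqrt ((b - x) * (x - a)))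
  rw [himg] at hchg
  rw [intervalIntegral.integral_of_le hab.le, MeasureTheory.integral_Ioc_eq_integral_Ioo, hchg]
  rw [intervalIntegral.integral_of_le Real.pi_pos.le, MeasureTheory.integral_Ioc_eq_integral_Ioo]
  apply MeasureTheory.setIntegral_congr_fun measurableSet_Ioo
  intro θ ⟨h0, hπ⟩
  have hsin : 0 < Real.sin θ := Real.sin_pos_of_pos_of_lt_pi h0 hπ
  have hc1 : Real.cos θ < 1 := by
    have := Real.strictAntiOn_cos ⟨le_refl 0, Real.pi_pos.le⟩ ⟨h0.le, hπ.le⟩ h0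
    rwa [Real.cos_zero] at this
  have hc2 : -1 < Real.cos θ := by
    have := Real.strictAntiOn_cos ⟨h0.le, hπ.le⟩ ⟨Real.pi_pos.le, le_refl _⟩ hπ
    rwa [Real.cos_pi] at this
  simp only [smul_eq_mul]
  have hbφ : b - φ θ = r * (1 - Real.cos θ) := by simp only [hφ]; rw [← hmrb]; ring
  have hφa : φ θ - a = r * (1 + Real.cos θ) := by simp only [hφ]; rw [← hmra]; ring
  have hprod : (b - φ θ) * (φ θ - a) = (r * Real.sin θ)^2 := by
    rw [hbφ, hφa]
    have h := Real.sin_sq_add_cos_sq θ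
    linear_combination (-(r^2)) * h
  rw [hprod, Real.sqrt_sq (by positivity)]
  rw [abs_of_nonpos (by nlinarith), show φ θ + t = (t + m) + r * Real.cos θ by simp only [hφ]; ring]
  field_simp


/-- `∫_a^b log(x+t) / √((b-x)(x-a)) dx = 2π log((√(t+a) + √(t+b))/2)` for `a < b`, `t+a > 0`. -/
theorem stmt8 (a b t : ℝ) (hab : a < b) (ht : 0 < t + a) :
    ∫ x in a..b, Real.log (x + t) / Real.sqrt ((b - x) * (x - a)) =
      2 * Real.pi * Real.log ((Real.sqrt (t + a) + Real.sqrt (t + b)) / 2) := by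
  have htb : (0:ℝ) < t + b := by linarith
  set c := t + (a+b)/2 with hc
  set r := (b-a)/2 with hr
  have hr0 : 0 < r := by rw [hr]; linarith
  have hrc : r < c := by rw [hr, hc]; linarith
  rw [key5 a b t hab, key4 c r hr0 hrc]
  have hcr : c^2 - r^2 = (t+a)*(t+b) := by rw [hc, hr]; ring
  have hD : Real.sqrt (c^2 - r^2) = Real.sqrt (t+a) * Real.sqrt (t+b) := by
    rw [hcr, Real.sqrt_mul ht.le]
  have hq : (c + Real.sqrt (c^2 - r^2)) / 2
      = ((Real.sqrt (t+a) + Real.sqrt (t+b)) / 2) ^ 2 := by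
    rw [hD]
    have h1 : Real.sqrt (t+a) ^ 2 = t + a := Real.sq_sqrt ht.le
    have h2 : Real.sqrt (t+b) ^ 2 = t + b := Real.sq_sqrt htb.le
    have : c = ((t+a) + (t+b)) / 2 := by rw [hc]; ring
    rw [this]
    linear_combination (-1/4)*h1 + (-1/4)*h2
  rw [hq, Real.log_pow]
  push_cast
  ring
end

section
/- For |z| < 1 with z in the cut plane, ₂F₁(1, 1/2; 5/2; z) = (3/4)·((z-1)/z^{3/2})·log((1+√z)/(1-√z)) + 3/(2z). -/
/-- The Gauss hypergeometric series `₂F₁(a,b;c;x) = Σ_k (a)_k (b)_k / ((c)_k k!) x^k`. -/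
noncomputable def twoF1 (a b c x : ℝ) : ℝ :=
  ∑' k : ℕ, ((ascPochhammer ℝ k).eval a * (ascPochhammer ℝ k).eval b) /
    ((ascPochhammer ℝ k).eval c * (Nat.factorial k : ℝ)) * x ^ k

lemma poch_ratio (k : ℕ) : (ascPochhammer ℝ k).eval (5/2) =
    (ascPochhammer ℝ k).eval (1/2) * ((2*k+1)*(2*k+3)/3) := by
  induction k with
  | zero => simp
  | succ n ih =>
    rw [ascPochhammer_succ_eval, ascPochhammer_succ_eval, ih]
    push_cast
    ring

lemma coeff_eq (k : ℕ) :
    ((ascPochhammer ℝ k).eval 1 * (ascPochhammer ℝ k).eval (1/2)) /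
      ((ascPochhammer ℝ k).eval (5/2) * (Nat.factorial k : ℝ)) =
      3 / ((2*k+1)*(2*k+3)) := by
  have hp : (0:ℝ) < (ascPochhammer ℝ k).eval (1/2) :=
    ascPochhammer_pos k (1/2 : ℝ) (by norm_num)
  have hf : (0:ℝ) < (Nat.factorial k : ℝ) := by positivity
  have h1 : (0:ℝ) < 2*(k:ℝ)+1 := by positivity
  have h3 : (0:ℝ) < 2*(k:ℝ)+3 := by positivity
  rw [ascPochhammer_eval_one, poch_ratio]
  field_simp

/-- For `0 < z < 1`,
`₂F₁(1,1/2;5/2;z) = (3/4)((z-1)/z^{3/2}) log((1+√z)/(1-√z)) + 3/(2z)`. -/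
theorem stmt13 (z : ℝ) (hz0 : 0 < z) (hz1 : z < 1) :
    twoF1 1 (1 / 2) (5 / 2) z =
      3 / 4 * ((z - 1) / z ^ ((3 : ℝ) / 2)) *
          Real.log ((1 + Real.sqrt z) / (1 - Real.sqrt z)) +
        3 / (2 * z) := by
  set t := Real.sqrt z with ht
  have ht0 : 0 < t := Real.sqrt_pos.mpr hz0
  have ht1 : t < 1 := by
    rw [ht, show (1:ℝ) = Real.sqrt 1 by simp]
    exact Real.sqrt_lt_sqrt hz0.le hz1
  have htz : t ^ 2 = z := Real.sq_sqrt hz0.le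
  set L := Real.log (1 + t) - Real.log (1 - t) with hL
  have habs : |t| < 1 := by rw [abs_of_pos ht0]; exact ht1
  -- base series: Σ 2/(2k+1) t^(2k+1) = L
  have hS := Real.hasSum_log_sub_log_of_abs_lt_one habs
  -- S1 : Σ z^k/(2k+1) = L/(2t)
  have hS1 : HasSum (fun k : ℕ => z ^ k / (2*k+1)) (L / (2*t)) := by
    have := hS.div_const (2*t)
    refine this.congr_fun fun k => ?_
    have : t ^ (2*k+1) = (t^2)^k * t := by ring
    rw [this, htz]
    field_simp
  -- shifted series: Σ_k t^(2(k+1)+1) * (2/(2(k+1)+1)) = L - 2t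
  have hS2' : HasSum (fun k : ℕ => (2:ℝ) * (1/(2*(k+1)+1)) * t^(2*(k+1)+1)) (L - 2*t) := by
    have := (hasSum_nat_add_iff' (f := fun k : ℕ => (2:ℝ) * (1/(2*k+1)) * t^(2*k+1)) 1).mpr hS
    simpa using this
  -- S2 : Σ z^k/(2k+3) = (L - 2t)/(2t^3)
  have hS2 : HasSum (fun k : ℕ => z ^ k / (2*k+3)) ((L - 2*t) / (2*t^3)) := by
    have := hS2'.div_const (2*t^3)
    refine this.congr_fun fun k => ?_
    have hpow : t ^ (2*(k+1)+1) = (t^2)^k * t^3 := by ring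
    rw [hpow, htz]
    have h3 : (2:ℝ)*(k:ℝ)+3 ≠ 0 := by positivity
    field_simp
    ring
  -- combined sum
  have hsum : HasSum (fun k : ℕ => 3 / ((2*(k:ℝ)+1)*(2*(k:ℝ)+3)) * z ^ k)
      ((3/2) * (L / (2*t)) - (3/2) * ((L - 2*t) / (2*t^3))) := by
    have := ((hS1.mul_left (3/2)).sub (hS2.mul_left (3/2)))
    refine this.congr_fun fun k => ?_
    have h1 : (2:ℝ)*(k:ℝ)+1 ≠ 0 := by positivity
    have h3 : (2:ℝ)*(k:ℝ)+3 ≠ 0 := by positivity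
    field_simp
    ring
  have hval : twoF1 1 (1/2) (5/2) z =
      (3/2) * (L / (2*t)) - (3/2) * ((L - 2*t) / (2*t^3)) := by
    rw [twoF1]
    rw [show (fun k : ℕ => ((ascPochhammer ℝ k).eval 1 * (ascPochhammer ℝ k).eval (1/2)) /
        ((ascPochhammer ℝ k).eval (5/2) * (Nat.factorial k : ℝ)) * z ^ k)
      = (fun k : ℕ => 3 / ((2*(k:ℝ)+1)*(2*(k:ℝ)+3)) * z ^ k) from funext fun k => by
        rw [coeff_eq]]
    exact hsum.tsum_eq
  rw [hval]
  have hrpow : z ^ ((3:ℝ)/2) = t^3 := by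
    rw [← htz, ← Real.rpow_natCast t 2, ← Real.rpow_mul ht0.le,
      show ((2:ℕ):ℝ)*((3:ℝ)/2) = ((3:ℕ):ℝ) by norm_num, Real.rpow_natCast]
  have hlog : Real.log ((1 + t) / (1 - t)) = L := by
    rw [hL, Real.log_div (by positivity) (by linarith)]
  rw [hrpow, hlog, ← htz]
  have htne : t ≠ 0 := ht0.ne'
  field_simp
  ring
end
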